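/- arXiv:1302.1232 — 2 statements merged into one kernel-verified Lean document; each statement's English description precedes it below -/
import Mathlib

section
/- With X Hermitian, u a unit vector, θ ≠ 0, and z an eigenvalue of X + θ u u* which is not an eigenvalue of X, any unit eigenvector ũ of X + θ u u* for z satisfies |⟨ũ, u⟩|² = (u*(zI−X)⁻¹u)² / (u*(zI−X)⁻²u) = 1/(θ² · u*(zI−X)⁻²u). -/
open Matrix

theorem stmt_3 {n : ℕ} (X : Matrix (Fin n) (Fin n) ℂ) (hX : X.IsHermitian)
    (u : Fin n → ℂ) (hu : star u ⬝ᵥ u = 1) (θ : ℝ) (hθ : θ ≠ 0)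
    (z : ℝ)
    (hz : ((z : ℂ) • (1 : Matrix (Fin n) (Fin n) ℂ) - X).det ≠ 0)
    (heq : star u ⬝ᵥ (((z : ℂ) • (1 : Matrix (Fin n) (Fin n) ℂ) - X)⁻¹ *ᵥ u) = 1 / (θ : ℂ))
    (tu : Fin n → ℂ) (htu : star tu ⬝ᵥ tu = 1)
    (hvec : (X + (θ : ℂ) • vecMulVec u (star u)) *ᵥ tu = (z : ℂ) • tu) :
    ((‖star tu ⬝ᵥ u‖ : ℂ) ^ 2 =
        (star u ⬝ᵥ (((z : ℂ) • (1 : Matrix (Fin n) (Fin n) ℂ) - X)⁻¹ *ᵥ u)) ^ 2 /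
          (star u ⬝ᵥ ((((z : ℂ) • (1 : Matrix (Fin n) (Fin n) ℂ) - X)⁻¹ *
            ((z : ℂ) • (1 : Matrix (Fin n) (Fin n) ℂ) - X)⁻¹) *ᵥ u))) ∧
    (‖star tu ⬝ᵥ u‖ : ℂ) ^ 2 =
      1 / ((θ : ℂ) ^ 2 *
        (star u ⬝ᵥ ((((z : ℂ) • (1 : Matrix (Fin n) (Fin n) ℂ) - X)⁻¹ *
          ((z : ℂ) • (1 : Matrix (Fin n) (Fin n) ℂ) - X)⁻¹) *ᵥ u))) := by
  set A := (z : ℂ) • (1 : Matrix (Fin n) (Fin n) ℂ) - X with hA_def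
  have hAH : A.IsHermitian := by
    simp [Matrix.IsHermitian, hA_def, conjTranspose_sub, conjTranspose_smul, hX.eq,
      Complex.star_def, Complex.conj_ofReal]
  have hdet : IsUnit A.det := isUnit_iff_ne_zero.mpr hz
  have hinv1 : A⁻¹ * A = 1 := nonsing_inv_mul A hdet
  set c := star u ⬝ᵥ tu with hc_def
  set S := star u ⬝ᵥ ((A⁻¹ * A⁻¹) *ᵥ u) with hS_def
  have hAtu : A *ᵥ tu = ((θ : ℂ) * c) • u := by
    have h1 : X *ᵥ tu + (θ : ℂ) • (vecMulVec u (star u) *ᵥ tu) = (z : ℂ) • tu := by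
      simpa [add_mulVec, smul_mulVec] using hvec
    have h2 : vecMulVec u (star u) *ᵥ tu = c • u := by
      funext i
      simp [mulVec, vecMulVec_apply, dotProduct, hc_def, Finset.mul_sum, mul_comm,
        mul_left_comm, mul_assoc]
    rw [h2] at h1
    funext i
    have := congrFun h1 i
    simp [hA_def, sub_mulVec, smul_mulVec, one_mulVec] at this ⊢
    rw [← this]; ring
  have htu_eq : tu = ((θ : ℂ) * c) • (A⁻¹ *ᵥ u) := by
    have := congrArg (fun v => A⁻¹ *ᵥ v) hAtu
    simpa [mulVec_mulVec, hinv1, one_mulVec, mulVec_smul] using this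
  -- key norm computation
  have hAinvH : (A⁻¹)ᴴ = A⁻¹ := by
    rw [conjTranspose_nonsing_inv, hAH.eq]
  have hww : star (A⁻¹ *ᵥ u) ⬝ᵥ (A⁻¹ *ᵥ u) = S := by
    rw [star_mulVec, hAinvH, hS_def, ← dotProduct_mulVec, mulVec_mulVec]
  have hkey : (θ : ℂ) ^ 2 * (star c * c) * S = 1 := by
    have := htu
    rw [htu_eq] at this
    have hθr : star ((θ : ℂ) * c) = (θ : ℂ) * star c := by
      simp [Complex.star_def, _root_.map_mul, Complex.conj_ofReal]
    rw [star_smul, smul_dotProduct, dotProduct_smul, hww, hθr, smul_eq_mul,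
      smul_eq_mul] at this
    rw [← this]; ring
  have hnorm : (‖star tu ⬝ᵥ u‖ : ℂ) ^ 2 = star c * c := by
    have h1 : star tu ⬝ᵥ u = star c := by
      rw [hc_def, star_dotProduct]
    rw [h1]
    have h2 : star c * c = ((Complex.normSq c : ℝ) : ℂ) := by
      rw [Complex.star_def, mul_comm, Complex.mul_conj]
    rw [h2, norm_star]
    norm_cast
    rw [Complex.sq_norm]
  have hθc : (θ : ℂ) ≠ 0 := by exact_mod_cast Complex.ofReal_ne_zero.mpr hθ
  have hS_ne : S ≠ 0 := by
    intro h
    rw [h, mul_zero] at hkey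
    exact one_ne_zero hkey.symm
  try simp only [Complex.star_def] at hkey hnorm ⊢
  constructor
  · rw [hnorm, heq]
    field_simp
    linear_combination hkey
  · rw [hnorm]
    field_simp
    linear_combination hkey
end

section
/- Let X be Hermitian, u a unit vector, θ ≠ 0, and z an eigenvalue of X̃ = X + θuu* with zI − X invertible. Writing μ for the weighted spectral measure of X with respect to u, the unit eigenvector ũ of X̃ at z satisfies |⟨ũ, u⟩|² = −1/(θ² G_μ'(z)), where G_μ'(z) = −∫ dμ(x)/(z−x)². In particular |⟨ũ,u⟩|² ≤ 1, i.e., ∫ dμ(x)/(z−x)² ≥ (∫ dμ(x)/(z−x))². -/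
open Matrix

lemma parseval_aux {n : ℕ} (q : Fin n → Fin n → ℂ)
    (horth : ∀ i j, star (q i) ⬝ᵥ q j = if i = j then 1 else 0)
    (x y : Fin n → ℂ) :
    ∑ i, star (star (q i) ⬝ᵥ x) * (star (q i) ⬝ᵥ y) = star x ⬝ᵥ y := by
  set M : Matrix (Fin n) (Fin n) ℂ := Matrix.of (fun i j => star (q i j)) with hMdef
  have hM1 : M * Mᴴ = 1 := by
    ext i j
    have := horth i j
    simpa [Matrix.mul_apply, Matrix.conjTranspose_apply, dotProduct, Matrix.one_apply,
      hMdef] using this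
  have hM2 : Mᴴ * M = 1 := mul_eq_one_comm.mp hM1
  have key : star (M *ᵥ x) ⬝ᵥ (M *ᵥ y) = star x ⬝ᵥ y := by
    rw [Matrix.star_mulVec, ← Matrix.dotProduct_mulVec, Matrix.mulVec_mulVec, hM2,
      Matrix.one_mulVec]
  calc ∑ i, star (star (q i) ⬝ᵥ x) * (star (q i) ⬝ᵥ y)
      = star (M *ᵥ x) ⬝ᵥ (M *ᵥ y) := by
        simp [dotProduct, Matrix.mulVec, hMdef, Pi.star_apply, star_sum]
    _ = star x ⬝ᵥ y := key

lemma vecMulVec_mulVec_aux {n : ℕ} (u v w : Fin n → ℂ) :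
    Matrix.vecMulVec u v *ᵥ w = (v ⬝ᵥ w) • u := by
  ext j
  simp only [Matrix.mulVec, Matrix.vecMulVec_apply, dotProduct, Pi.smul_apply, smul_eq_mul,
    Finset.sum_mul]
  exact Finset.sum_congr rfl fun k _ => by ring

theorem stmt_19 {n : ℕ} (X : Matrix (Fin n) (Fin n) ℂ) (hX : X.IsHermitian)
    (lam : Fin n → ℝ) (q : Fin n → Fin n → ℂ)
    (heig : ∀ i, X *ᵥ q i = (lam i : ℂ) • q i)
    (horth : ∀ i j, star (q i) ⬝ᵥ q j = if i = j then 1 else 0)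
    (u : Fin n → ℂ) (hu : star u ⬝ᵥ u = 1)
    (θ : ℝ) (hθ : θ ≠ 0) (z : ℝ) (hz : ∀ i, z ≠ lam i)
    (heq : ∑ i, ‖star (q i) ⬝ᵥ u‖ ^ 2 / (z - lam i) = 1 / θ)
    (tu : Fin n → ℂ) (htu : star tu ⬝ᵥ tu = 1)
    (hvec : (X + (θ : ℂ) • vecMulVec u (star u)) *ᵥ tu = (z : ℂ) • tu) :
    ‖star tu ⬝ᵥ u‖ ^ 2 =
      1 / (θ ^ 2 * ∑ i, ‖star (q i) ⬝ᵥ u‖ ^ 2 / (z - lam i) ^ 2) ∧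
    ‖star tu ⬝ᵥ u‖ ^ 2 ≤ 1 ∧
    (∑ i, ‖star (q i) ⬝ᵥ u‖ ^ 2 / (z - lam i)) ^ 2 ≤
      ∑ i, ‖star (q i) ⬝ᵥ u‖ ^ 2 / (z - lam i) ^ 2 := by
  set a : Fin n → ℂ := fun i => star (q i) ⬝ᵥ tu with ha
  set b : Fin n → ℂ := fun i => star (q i) ⬝ᵥ u with hb
  set c : ℂ := star u ⬝ᵥ tu with hc
  have hzl : ∀ i, ((z : ℂ) - (lam i : ℂ)) ≠ 0 := by
    intro i h
    rw [sub_eq_zero] at h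
    exact hz i (by exact_mod_cast h)
  have hzlR : ∀ i, (z - lam i) ≠ 0 := fun i h => hz i (by linarith)
  -- component equation
  have hai : ∀ i, a i = (θ : ℂ) * c * b i / ((z : ℂ) - (lam i : ℂ)) := by
    intro i
    have h1 := congrArg (fun v => star (q i) ⬝ᵥ v) hvec
    have hrow : star (q i) ᵥ* X = ((lam i : ℂ)) • star (q i) := by
      have h2 := congrArg star (heig i)
      rw [Matrix.star_mulVec, hX.eq] at h2
      rw [h2, star_smul]
      simp [Complex.conj_ofReal]
    rw [Matrix.add_mulVec, dotProduct_add, Matrix.dotProduct_mulVec, hrow,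
      Matrix.smul_mulVec, vecMulVec_mulVec_aux, dotProduct_smul, dotProduct_smul,
      dotProduct_smul] at h1
    -- h1 : (lam i) • a i + θ • (c • b i) = z • a i
    have h2 : ((lam i : ℂ)) * a i + (θ : ℂ) * (c * b i) = (z : ℂ) * a i := by
      simpa [smul_eq_mul, ha, hb, hc] using h1
    rw [eq_div_iff (hzl i)]
    linear_combination -h2
  -- Parseval for tu and u
  have hA : (∑ i, (‖a i‖ : ℂ) ^ 2) = 1 := by
    have := parseval_aux q horth tu tu
    change ∑ i, star (a i) * a i = _ at this
    rw [htu] at this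
    rw [← this]
    exact Finset.sum_congr rfl fun i _ => by
      rw [RCLike.star_def, RCLike.conj_mul]; push_cast; rfl
  have hB : (∑ i, ‖b i‖ ^ 2) = 1 := by
    have := parseval_aux q horth u u
    change ∑ i, star (b i) * b i = _ at this
    rw [hu] at this
    have h2 : (∑ i, (‖b i‖ : ℂ) ^ 2) = 1 := by
      rw [← this]
      exact Finset.sum_congr rfl fun i _ => by
        rw [RCLike.star_def, RCLike.conj_mul]; push_cast; rfl
    exact_mod_cast (by push_cast at h2 ⊢; exact h2 : ((∑ i, ‖b i‖ ^ 2 : ℝ) : ℂ) = 1)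
  -- norm of a i
  have hnai : ∀ i, ‖a i‖ ^ 2 = θ ^ 2 * ‖c‖ ^ 2 * (‖b i‖ ^ 2 / (z - lam i) ^ 2) := by
    intro i
    rw [hai i]
    rw [norm_div, norm_mul, norm_mul]
    have h1 : ‖(θ : ℂ)‖ = |θ| := (Complex.norm_real θ).trans (Real.norm_eq_abs θ)
    have h2 : ‖((z : ℂ) - (lam i : ℂ))‖ = |z - lam i| := by
      rw [← Complex.ofReal_sub]; exact (Complex.norm_real _).trans (Real.norm_eq_abs _)
    rw [h1, h2, div_pow, mul_pow, mul_pow, sq_abs, sq_abs]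
    ring
  set S2 : ℝ := ∑ i, ‖b i‖ ^ 2 / (z - lam i) ^ 2 with hS2
  have hkey : θ ^ 2 * ‖c‖ ^ 2 * S2 = 1 := by
    have hAr : (∑ i, ‖a i‖ ^ 2) = 1 := by
      have : ((∑ i, ‖a i‖ ^ 2 : ℝ) : ℂ) = 1 := by push_cast; exact hA
      exact_mod_cast this
    rw [← hAr, hS2, Finset.mul_sum]
    exact Finset.sum_congr rfl fun i _ => (hnai i).symm
  have hS2nonneg : 0 ≤ S2 := Finset.sum_nonneg fun i _ =>
    div_nonneg (sq_nonneg _) (sq_nonneg _)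
  have hθ2 : (0 : ℝ) < θ ^ 2 := by positivity
  have hS2pos : 0 < S2 := by
    rcases hS2nonneg.lt_or_eq with h | h
    · exact h
    · exfalso; rw [← h] at hkey; simp at hkey
  -- norm of star tu ⬝ᵥ u equals norm of c
  have hcnorm : ‖star tu ⬝ᵥ u‖ = ‖c‖ := by
    have : star tu ⬝ᵥ u = star c := by
      rw [hc]
      simp [dotProduct, star_sum, mul_comm]
    rw [this, norm_star]
  -- Cauchy-Schwarz : ‖c‖ ≤ 1
  have hc1 : ‖c‖ ^ 2 ≤ 1 := by
    have hP := parseval_aux q horth u tu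
    change ∑ i, star (b i) * a i = _ at hP
    rw [← hc] at hP
    have h1 : ‖c‖ ≤ ∑ i, ‖b i‖ * ‖a i‖ := by
      rw [← hP]
      refine (norm_sum_le _ _).trans ?_
      refine Finset.sum_le_sum fun i _ => ?_
      rw [norm_mul, norm_star]
    have h2 : (∑ i, ‖b i‖ * ‖a i‖) ^ 2 ≤ (∑ i, ‖b i‖ ^ 2) * ∑ i, ‖a i‖ ^ 2 :=
      Finset.sum_mul_sq_le_sq_mul_sq _ _ _
    have hAr : (∑ i, ‖a i‖ ^ 2) = 1 := by
      have : ((∑ i, ‖a i‖ ^ 2 : ℝ) : ℂ) = 1 := by push_cast; exact hA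
      exact_mod_cast this
    rw [hB, hAr, one_mul] at h2
    calc ‖c‖ ^ 2 ≤ (∑ i, ‖b i‖ * ‖a i‖) ^ 2 := by
          apply pow_le_pow_left₀ (norm_nonneg _) h1
      _ ≤ 1 := h2
  refine ⟨?_, ?_, ?_⟩
  · rw [hcnorm]
    rw [eq_div_iff (mul_pos hθ2 hS2pos).ne']
    linear_combination hkey
  · rw [hcnorm]; exact hc1
  · rw [heq, div_pow, one_pow, div_le_iff₀ hθ2]
    nlinarith [hkey, mul_nonneg (mul_nonneg hθ2.le hS2nonneg) (sub_nonneg.mpr hc1)]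
end
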